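/- Let ∇ be the torsion-free affine connection on ℝ³ whose only nonzero Christoffel symbols are Γ²₁₁ = f₁, Γ²₂₂ = f₂, Γ²₃₃ = f₃ for smooth functions f₁, f₂, f₃ : ℝ³ → ℝ. Then ∇ is affine Szabó (i.e. at every point p ∈ ℝ³ the characteristic polynomial of the affine Szabó operator S(X) equals λ³ for every X ∈ ℝ³) if and only if the Ricci tensor of ∇ is cyclic parallel at every point of ℝ³. -/

import Mathlib

open scoped BigOperators

noncomputable section

variable {ι : Type} [Fintype ι] [DecidableEq ι]

/-- Partial derivative in the `i`-th coordinate direction. -/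
def pd (i : ι) (f : (ι → ℝ) → ℝ) : (ι → ℝ) → ℝ :=
  fun p => fderiv ℝ f p (Pi.single i 1)

/-- Curvature components `R^l_{ijk}` of the torsion-free connection with Christoffel
symbols `Γ k i j = Γᵏᵢⱼ`:
`Rˡᵢⱼₖ = ∂ᵢΓˡⱼₖ − ∂ⱼΓˡᵢₖ + Σₘ (Γˡᵢₘ Γᵐⱼₖ − Γˡⱼₘ Γᵐᵢₖ)`. -/
def curv (Γ : ι → ι → ι → (ι → ℝ) → ℝ) (l i j k : ι) : (ι → ℝ) → ℝ :=
  fun p => pd i (Γ l j k) p - pd j (Γ l i k) p +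
    ∑ m, (Γ l i m p * Γ m j k p - Γ l j m p * Γ m i k p)

/-- Components `(∇ₕR)ˡᵢⱼₖ` of the covariant derivative of the curvature. -/
def covR (Γ : ι → ι → ι → (ι → ℝ) → ℝ) (h l i j k : ι) : (ι → ℝ) → ℝ :=
  fun p => pd h (curv Γ l i j k) p +
    ∑ m, (Γ l h m p * curv Γ m i j k p - Γ m h i p * curv Γ l m j k p
      - Γ m h j p * curv Γ l i m k p - Γ m h k p * curv Γ l i j m p)

/-- The Szabó operator `S(X) : Y ↦ (∇_X R)(Y,X)X` at the point `p`, as a matrix: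
`(S(X)Y)ˡ = Σ_{h,i,j,k} Xʰ Yⁱ Xʲ Xᵏ (∇ₕR)ˡᵢⱼₖ`. -/
def szabo (Γ : ι → ι → ι → (ι → ℝ) → ℝ) (p X : ι → ℝ) : Matrix ι ι ℝ :=
  Matrix.of fun l i => ∑ h, ∑ j, ∑ k, X h * X j * X k * covR Γ h l i j k p

/-- Ricci tensor `Ricⱼₖ = Σᵢ Rⁱᵢⱼₖ`. -/
def ricci (Γ : ι → ι → ι → (ι → ℝ) → ℝ) (j k : ι) : (ι → ℝ) → ℝ :=
  fun p => ∑ i, curv Γ i i j k p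

/-- Covariant derivative of the Ricci tensor,
`(∇ᵢRic)ⱼₖ = ∂ᵢRicⱼₖ − Σₘ (Γᵐᵢⱼ Ricₘₖ + Γᵐᵢₖ Ricⱼₘ)`. -/
def covRic (Γ : ι → ι → ι → (ι → ℝ) → ℝ) (i j k : ι) : (ι → ℝ) → ℝ :=
  fun p => pd i (ricci Γ j k) p -
    ∑ m, (Γ m i j p * ricci Γ m k p + Γ m i k p * ricci Γ j m p)

/-- The Ricci tensor is cyclic parallel at `p`. -/
def CyclicParallelAt (Γ : ι → ι → ι → (ι → ℝ) → ℝ) (p : ι → ℝ) : Prop :=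
  ∀ i j k, covRic Γ i j k p + covRic Γ j k i p + covRic Γ k i j p = 0

/-- Christoffel symbols `Γ̃ᶜₐᵦ = ½ Σ_d g̃ᶜᵈ (∂ₐ g̃ᵦ_d + ∂ᵦ g̃ₐ_d − ∂_d g̃ₐᵦ)` of the
Levi-Civita connection of a pseudo-Riemannian metric `g`. -/
def christoffel (g : (ι → ℝ) → Matrix ι ι ℝ) (c a b : ι) : (ι → ℝ) → ℝ :=
  fun p => (1 / 2) * ∑ d, (g p)⁻¹ c d *
    (pd a (fun q => g q b d) p + pd b (fun q => g q a d) p - pd d (fun q => g q a b) p)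

end

/-- The torsion-free connection on `ℝ³` whose only nonzero Christoffel symbols are
`Γ²₁₁ = f₁`, `Γ²₂₂ = f₂`, `Γ²₃₃ = f₃` (indices `1,2,3` are `0,1,2` in `Fin 3`). -/
def gammaF (f₁ f₂ f₃ : (Fin 3 → ℝ) → ℝ) : Fin 3 → Fin 3 → Fin 3 → (Fin 3 → ℝ) → ℝ :=
  fun k i j =>
    if k = 1 ∧ i = 0 ∧ j = 0 then f₁
    else if k = 1 ∧ i = 1 ∧ j = 1 then f₂
    else if k = 1 ∧ i = 2 ∧ j = 2 then f₃
    else 0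



/- ### Auxiliary lemmas -/

open Polynomial in
lemma charpoly_row (M : Matrix (Fin 3) (Fin 3) ℝ) (h0 : ∀ i, M 0 i = 0) (h2 : ∀ i, M 2 i = 0) :
    M.charpoly = X ^ 3 ↔ M 1 1 = 0 := by
  have hcp : M.charpoly = X ^ 3 - C (M 1 1) * X ^ 2 := by
    rw [Matrix.charpoly, Matrix.det_fin_three]
    simp [Matrix.charmatrix_apply_eq, Matrix.charmatrix_apply_ne, h0, h2]
    ring
  rw [hcp]
  constructor
  · intro h
    have h2 := congrArg (fun q => Polynomial.coeff q 2) h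
    simpa [coeff_X_pow] using h2
  · intro h; rw [h]; simp

set_option maxHeartbeats 1000000 in
lemma cubic_key (A : Fin 3 → Fin 3 → Fin 3 → ℝ)
    (hs : A 0 1 2 + A 1 2 0 + A 2 0 1 = A 0 2 1 + A 2 1 0 + A 1 0 2) :
    (∀ X : Fin 3 → ℝ, ∑ h, ∑ j, ∑ k, X h * X j * X k * A h j k = 0) ↔
      (∀ i j k, A i j k + A j k i + A k i j = 0) := by
  constructor
  · intro hQ
    have e1 := hQ ![1,0,0]
    have e2 := hQ ![0,1,0]
    have e3 := hQ ![0,0,1]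
    have e4 := hQ ![1,1,0]
    have e5 := hQ ![1,-1,0]
    have e6 := hQ ![1,0,1]
    have e7 := hQ ![1,0,-1]
    have e8 := hQ ![0,1,1]
    have e9 := hQ ![0,1,-1]
    have e10 := hQ ![1,1,1]
    have e11 := hQ ![1,1,-1]
    have e12 := hQ ![1,-1,1]
    have e13 := hQ ![-1,1,1]
    simp [Fin.sum_univ_three] at e1 e2 e3 e4 e5 e6 e7 e8 e9 e10 e11 e12 e13
    intro i j k
    fin_cases i <;> fin_cases j <;> fin_cases k <;>
      simp only [show (⟨0, by norm_num⟩ : Fin 3) = 0 from rfl,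
        show (⟨1, by norm_num⟩ : Fin 3) = 1 from rfl,
        show (⟨2, by norm_num⟩ : Fin 3) = 2 from rfl] <;>
      linarith [e1,e2,e3,e4,e5,e6,e7,e8,e9,e10,e11,e12,e13,hs]
  · intro hC X
    have h3 : (3:ℝ) * (∑ h, ∑ j, ∑ k, X h * X j * X k * A h j k) =
        ∑ h, ∑ j, ∑ k, X h * X j * X k * (A h j k + A j k h + A k h j) := by
      simp only [Fin.sum_univ_three]
      ring
    have : ∑ h, ∑ j, ∑ k, X h * X j * X k * (A h j k + A j k h + A k h j) = 0 := by
      simp only [Fin.sum_univ_three, hC]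
      ring
    linarith [h3, this]

section
variable (f₁ f₂ f₃ : (Fin 3 → ℝ) → ℝ)

lemma g0 (a b : Fin 3) : gammaF f₁ f₂ f₃ 0 a b = 0 := by simp [gammaF]
lemma g2 (a b : Fin 3) : gammaF f₁ f₂ f₃ 2 a b = 0 := by simp [gammaF]

lemma pd_zero (i : Fin 3) : pd i (0 : (Fin 3 → ℝ) → ℝ) = fun _ => 0 := by
  funext p
  have : (0 : (Fin 3 → ℝ) → ℝ) = fun _ => (0:ℝ) := rfl
  rw [pd, this, fderiv_fun_const]; simp

lemma curv0 (i j k : Fin 3) : curv (gammaF f₁ f₂ f₃) 0 i j k = fun _ => 0 := by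
  funext q
  simp [curv, g0, pd_zero, Fin.sum_univ_three]

lemma curv2 (i j k : Fin 3) : curv (gammaF f₁ f₂ f₃) 2 i j k = fun _ => 0 := by
  funext q
  simp [curv, g2, pd_zero, Fin.sum_univ_three]
end

section
variable (f₁ f₂ f₃ : (Fin 3 → ℝ) → ℝ)

lemma ricci_eq (j k : Fin 3) :
    ricci (gammaF f₁ f₂ f₃) j k = curv (gammaF f₁ f₂ f₃) 1 1 j k := by
  funext q
  simp [ricci, Fin.sum_univ_three, curv0, curv2]

lemma ricci01 : ricci (gammaF f₁ f₂ f₃) 0 1 = fun q => -(pd 0 f₂ q) := by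
  rw [ricci_eq]; funext q
  simp [curv, gammaF, Fin.sum_univ_three, pd_zero]

lemma ricci21 : ricci (gammaF f₁ f₂ f₃) 2 1 = fun q => -(pd 2 f₂ q) := by
  rw [ricci_eq]; funext q
  simp [curv, gammaF, Fin.sum_univ_three, pd_zero]

lemma ricci1k (k : Fin 3) : ricci (gammaF f₁ f₂ f₃) 1 k = fun _ => 0 := by
  rw [ricci_eq]; funext q
  simp [curv, Fin.sum_univ_three]

lemma ricci02 : ricci (gammaF f₁ f₂ f₃) 0 2 = fun _ => 0 := by
  rw [ricci_eq]; funext q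
  simp [curv, gammaF, Fin.sum_univ_three, pd_zero]

lemma ricci20 : ricci (gammaF f₁ f₂ f₃) 2 0 = fun _ => 0 := by
  rw [ricci_eq]; funext q
  simp [curv, gammaF, Fin.sum_univ_three, pd_zero]
end

lemma pd_comm (f : (Fin 3 → ℝ) → ℝ) (hf : ContDiff ℝ (⊤ : ℕ∞) f) (i j : Fin 3) (p : Fin 3 → ℝ) :
    pd i (pd j f) p = pd j (pd i f) p := by
  have hdf : Differentiable ℝ f := hf.differentiable (by simp)
  have hf' : ContDiff ℝ (⊤ : ℕ∞) (fderiv ℝ f) := hf.fderiv_right (by exact_mod_cast le_top)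
  have hx : HasFDerivAt (fderiv ℝ f) (fderiv ℝ (fderiv ℝ f) p) p :=
    (hf'.differentiable (by simp) p).hasFDerivAt
  have hsym := second_derivative_symmetric (fun y => (hdf y).hasFDerivAt) hx
    (Pi.single i 1) (Pi.single j 1)
  have key : ∀ (a b : Fin 3),
      pd a (pd b f) p = fderiv ℝ (fderiv ℝ f) p (Pi.single a 1) (Pi.single b 1) := by
    intro a b
    have : pd b f = fun q => (fderiv ℝ f q) (Pi.single b 1) := rfl
    rw [pd, this]
    rw [fderiv_clm_apply (hf'.differentiable (by simp) p) (differentiableAt_const _)]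
    simp
  rw [key, key, hsym]

lemma pd_neg (g : (Fin 3 → ℝ) → ℝ) (i : Fin 3) (p : Fin 3 → ℝ) :
    pd i (fun q => -(g q)) p = -(pd i g p) := by
  simp [pd, fderiv_neg]

lemma pd_constfun (i : Fin 3) (c : ℝ) (p : Fin 3 → ℝ) : pd i (fun _ => c) p = 0 := by
  simp [pd]

section
variable (f₁ f₂ f₃ : (Fin 3 → ℝ) → ℝ)

lemma hsym_key (hf₂ : ContDiff ℝ (⊤ : ℕ∞) f₂) (p : Fin 3 → ℝ) :
    covRic (gammaF f₁ f₂ f₃) 0 1 2 p + covRic (gammaF f₁ f₂ f₃) 1 2 0 p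
      + covRic (gammaF f₁ f₂ f₃) 2 0 1 p
    = covRic (gammaF f₁ f₂ f₃) 0 2 1 p + covRic (gammaF f₁ f₂ f₃) 2 1 0 p
      + covRic (gammaF f₁ f₂ f₃) 1 0 2 p := by
  simp [covRic, Fin.sum_univ_three, ricci01, ricci21, ricci02, ricci20, ricci1k,
    pd_neg, pd_constfun, gammaF]
  rw [pd_comm f₂ hf₂ 2 0 p]
end

section
variable (f₁ f₂ f₃ : (Fin 3 → ℝ) → ℝ)

lemma covR_row0 (h i j k : Fin 3) (p : Fin 3 → ℝ) :
    covR (gammaF f₁ f₂ f₃) h 0 i j k p = 0 := by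
  simp [covR, Fin.sum_univ_three, curv0, curv2, g0, g2, pd_constfun]

lemma covR_row2 (h i j k : Fin 3) (p : Fin 3 → ℝ) :
    covR (gammaF f₁ f₂ f₃) h 2 i j k p = 0 := by
  simp [covR, Fin.sum_univ_three, curv0, curv2, g0, g2, pd_constfun]

lemma covR_11 (h j k : Fin 3) (p : Fin 3 → ℝ) :
    covR (gammaF f₁ f₂ f₃) h 1 1 j k p = covRic (gammaF f₁ f₂ f₃) h j k p := by
  simp only [covR, covRic, Fin.sum_univ_three, curv0, curv2, g0, g2, ricci_eq, pd_constfun, Pi.zero_apply]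
  ring
end

/-- the connection with `Γ²₁₁ = f₁`, `Γ²₂₂ = f₂`, `Γ²₃₃ = f₃` is affine Szabó
(the characteristic polynomial of the affine Szabó operator `S(X)` is `λ³` at every point,
for every `X`) if and only if its Ricci tensor is cyclic parallel everywhere. -/
theorem stmt_5 (f₁ f₂ f₃ : (Fin 3 → ℝ) → ℝ)
    (hsmooth₁ : ContDiff ℝ (⊤ : ℕ∞) f₁) (hsmooth₂ : ContDiff ℝ (⊤ : ℕ∞) f₂)
    (hsmooth₃ : ContDiff ℝ (⊤ : ℕ∞) f₃) :
    (∀ (p : Fin 3 → ℝ) (X : Fin 3 → ℝ),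
        (szabo (gammaF f₁ f₂ f₃) p X).charpoly = Polynomial.X ^ 3) ↔
      (∀ p : Fin 3 → ℝ, CyclicParallelAt (gammaF f₁ f₂ f₃) p) := by
  have key : ∀ (p X : Fin 3 → ℝ),
      (szabo (gammaF f₁ f₂ f₃) p X).charpoly = Polynomial.X ^ 3 ↔
        (∑ h, ∑ j, ∑ k, X h * X j * X k * covRic (gammaF f₁ f₂ f₃) h j k p) = 0 := by
    intro p X
    have h0 : ∀ i, szabo (gammaF f₁ f₂ f₃) p X 0 i = 0 := by
      intro i; simp [szabo, covR_row0]
    have h2 : ∀ i, szabo (gammaF f₁ f₂ f₃) p X 2 i = 0 := by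
      intro i; simp [szabo, covR_row2]
    rw [charpoly_row _ h0 h2]
    have : szabo (gammaF f₁ f₂ f₃) p X 1 1
        = ∑ h, ∑ j, ∑ k, X h * X j * X k * covRic (gammaF f₁ f₂ f₃) h j k p := by
      simp only [szabo, Matrix.of_apply, covR_11]
    rw [this]
  constructor
  · intro H p
    exact (cubic_key (fun h j k => covRic (gammaF f₁ f₂ f₃) h j k p)
      (hsym_key f₁ f₂ f₃ hsmooth₂ p)).mp (fun X => (key p X).mp (H p X))
  · intro H p X
    exact (key p X).mpr
      ((cubic_key (fun h j k => covRic (gammaF f₁ f₂ f₃) h j k p)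
        (hsym_key f₁ f₂ f₃ hsmooth₂ p)).mpr (H p) X)
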